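/- Let f : ℝᴰ → ℝ be twice differentiable and nonnegative, with ‖∇²f(θ)‖_{p→q} ≤ H₀ + H₁·f(θ) for all θ (H₀, H₁ ≥ 0, 1/p + 1/q = 1). Then for all x, y with ‖y − x‖_p ≤ 1/√H₁: ‖∇f(y) − ∇f(x)‖_q ≤ e·(H₀ + H₁·f(x))·‖y − x‖_p. -/

import Mathlib

open scoped BigOperators

noncomputable def lpNorm (p : ENNReal) {ι : Type*} [Fintype ι] (x : ι → ℝ) : ℝ :=
  ‖(WithLp.equiv p (ι → ℝ)).symm x‖

noncomputable def opNorm (p q : ENNReal) {ι κ : Type*} [Fintype ι] [Fintype κ]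
    (A : Matrix ι κ ℝ) : ℝ :=
  sSup {c | ∃ x : κ → ℝ, lpNorm p x ≤ 1 ∧ c = lpNorm q (A.mulVec x)}

noncomputable def dotCLM {n : ℕ} (v : Fin n → ℝ) : (Fin n → ℝ) →L[ℝ] ℝ :=
  LinearMap.toContinuousLinearMap (∑ i, v i • (LinearMap.proj i : (Fin n → ℝ) →ₗ[ℝ] ℝ))

noncomputable def mulVecCLM {m n : ℕ} (M : Matrix (Fin m) (Fin n) ℝ) :
    (Fin n → ℝ) →L[ℝ] (Fin m → ℝ) :=
  LinearMap.toContinuousLinearMap M.mulVecLin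

/-! ### Auxiliary lemmas -/

lemma dotCLM_apply' {n : ℕ} (v u : Fin n → ℝ) : dotCLM v u = ∑ i, v i * u i := by
  simp [dotCLM]

lemma dotCLM_comm' {n : ℕ} (v u : Fin n → ℝ) : dotCLM v u = dotCLM u v := by
  simp [dotCLM_apply', mul_comm]

lemma mulVecCLM_apply' {m n : ℕ} (M : Matrix (Fin m) (Fin n) ℝ) (v : Fin n → ℝ) :
    mulVecCLM M v = M.mulVec v := by
  simp [mulVecCLM]

lemma lpNorm_smul' (p : ENNReal) (hp : 1 ≤ p) {ι : Type*} [Fintype ι] (c : ℝ) (x : ι → ℝ) :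
    lpNorm p (c • x) = |c| * lpNorm p x := by
  haveI : Fact (1 ≤ p) := ⟨hp⟩
  simp [lpNorm, WithLp.toLp_smul, norm_smul, Real.norm_eq_abs]

lemma lpNorm_nonneg' (p : ENNReal) (hp : 1 ≤ p) {ι : Type*} [Fintype ι] (x : ι → ℝ) :
    0 ≤ lpNorm p x := by
  haveI : Fact (1 ≤ p) := ⟨hp⟩
  exact norm_nonneg _

lemma lpNorm_eq_zero' (p : ENNReal) (hp : 1 ≤ p) {ι : Type*} [Fintype ι] {x : ι → ℝ}
    (h : lpNorm p x = 0) : x = 0 := by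
  haveI : Fact (1 ≤ p) := ⟨hp⟩
  have := norm_eq_zero.mp h
  simpa using congrArg (WithLp.equiv p (ι → ℝ)) this

lemma opNorm_bound' {D : ℕ} (p q : ENNReal) (hp : 1 ≤ p) (hq : 1 ≤ q)
    (M : Matrix (Fin D) (Fin D) ℝ) (v : Fin D → ℝ) :
    lpNorm q (M.mulVec v) ≤ opNorm p q M * lpNorm p v := by
  haveI : Fact (1 ≤ p) := ⟨hp⟩
  haveI : Fact (1 ≤ q) := ⟨hq⟩
  set T : PiLp p (fun _ : Fin D => ℝ) →L[ℝ] PiLp q (fun _ : Fin D => ℝ) :=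
    ((PiLp.continuousLinearEquiv q ℝ (fun _ : Fin D => ℝ)).symm.toContinuousLinearMap).comp
      ((mulVecCLM M).comp
        (PiLp.continuousLinearEquiv p ℝ (fun _ : Fin D => ℝ)).toContinuousLinearMap) with hT
  have hTval : ∀ x : Fin D → ℝ,
      lpNorm q (M.mulVec x) = ‖T ((WithLp.equiv p (Fin D → ℝ)).symm x)‖ := by
    intro x
    simp [hT, lpNorm, mulVecCLM, PiLp.coe_continuousLinearEquiv]
  have hbdd : BddAbove {c | ∃ x : Fin D → ℝ, lpNorm p x ≤ 1 ∧ c = lpNorm q (M.mulVec x)} := by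
    refine ⟨‖T‖, ?_⟩
    rintro c ⟨x, hx, rfl⟩
    rw [hTval x]
    calc ‖T ((WithLp.equiv p (Fin D → ℝ)).symm x)‖
        ≤ ‖T‖ * ‖(WithLp.equiv p (Fin D → ℝ)).symm x‖ := T.le_opNorm _
      _ ≤ ‖T‖ * 1 := mul_le_mul_of_nonneg_left hx (norm_nonneg T)
      _ = ‖T‖ := mul_one _
  rcases eq_or_ne (lpNorm p v) 0 with h0 | h0
  · have hv : v = 0 := lpNorm_eq_zero' p hp h0
    subst hv
    simp only [Matrix.mulVec_zero, h0, mul_zero]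
    simp [lpNorm]
  · have hpos : 0 < lpNorm p v := lt_of_le_of_ne (norm_nonneg _) (Ne.symm h0)
    set c := (lpNorm p v)⁻¹ with hc
    have hcpos : 0 < c := inv_pos.mpr hpos
    have hmem : lpNorm q (M.mulVec (c • v)) ∈
        {c | ∃ x : Fin D → ℝ, lpNorm p x ≤ 1 ∧ c = lpNorm q (M.mulVec x)} := by
      refine ⟨c • v, ?_, rfl⟩
      rw [lpNorm_smul' p hp, abs_of_pos hcpos, hc, inv_mul_cancel₀ h0]
    have hle := le_csSup hbdd hmem
    rw [Matrix.mulVec_smul, lpNorm_smul' q hq, abs_of_pos hcpos] at hle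
    have := mul_le_mul_of_nonneg_right hle hpos.le
    rw [mul_assoc, mul_comm (lpNorm q (M.mulVec v)), inv_mul_cancel_left₀ h0] at this
    simpa [opNorm] using this

/-! ### Hölder -/

lemma lpNorm_one' {D : ℕ} (u : Fin D → ℝ) : lpNorm 1 u = ∑ i, |u i| := by
  rw [lpNorm, PiLp.norm_eq_sum (by simp)]
  simp [Real.norm_eq_abs]

lemma lpNorm_top' {D : ℕ} (w : Fin D → ℝ) : lpNorm ⊤ w = ⨆ i, |w i| := by
  rw [lpNorm, PiLp.norm_eq_ciSup]
  simp [Real.norm_eq_abs]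

lemma lpNorm_real' {D : ℕ} (p : ENNReal) (hp : 0 < p.toReal) (u : Fin D → ℝ) :
    lpNorm p u = (∑ i, |u i| ^ p.toReal) ^ (1 / p.toReal) := by
  rw [lpNorm, PiLp.norm_eq_sum hp]
  simp [Real.norm_eq_abs]

lemma abs_le_lpNorm_top' {D : ℕ} (w : Fin D → ℝ) (i : Fin D) : |w i| ≤ lpNorm ⊤ w := by
  rw [lpNorm_top']
  exact le_ciSup (f := fun j => |w j|) (Set.Finite.bddAbove (Set.finite_range _)) i

lemma holder_one_top' {D : ℕ} (u w : Fin D → ℝ) :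
    |∑ i, u i * w i| ≤ lpNorm 1 u * lpNorm ⊤ w := by
  have habs : |∑ i, u i * w i| ≤ ∑ i, |u i| * |w i| := by
    refine (Finset.abs_sum_le_sum_abs _ _).trans ?_
    simp [abs_mul, le_refl]
  refine habs.trans ?_
  rw [lpNorm_one', Finset.sum_mul]
  exact Finset.sum_le_sum fun i _ =>
    mul_le_mul_of_nonneg_left (abs_le_lpNorm_top' w i) (abs_nonneg _)

lemma q_top_of_p_one' (q : ENNReal) (hpq : 1/1 + 1/q = 1) : q = ⊤ := by
  have h : 1/q = 0 := by
    rw [one_div, inv_one] at hpq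
    exact (ENNReal.add_right_inj ENNReal.one_ne_top).mp (by rw [add_zero]; exact hpq)
  simpa [ENNReal.div_eq_zero_iff] using h

lemma q_one_of_p_top' (q : ENNReal) (hpq : 1/(⊤:ENNReal) + 1/q = 1) : q = 1 := by
  rw [one_div, ENNReal.inv_top, zero_add, one_div] at hpq
  simpa using congrArg (·⁻¹) hpq

lemma conj_real' (p q : ENNReal) (hp : 1 ≤ p) (hq : 1 ≤ q) (hpq : 1/p + 1/q = 1)
    (hp1 : p ≠ 1) (hpt : p ≠ ⊤) : Real.HolderConjugate p.toReal q.toReal := by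
  have hp0 : p ≠ 0 := (zero_lt_one.trans_le hp).ne'
  have hq0 : q ≠ 0 := (zero_lt_one.trans_le hq).ne'
  have hqt : q ≠ ⊤ := by
    rintro rfl
    simp only [one_div, ENNReal.inv_top, add_zero, ENNReal.inv_eq_one] at hpq
    exact hp1 hpq
  rw [Real.holderConjugate_iff]
  constructor
  · have := (ENNReal.toReal_lt_toReal ENNReal.one_ne_top hpt).mpr
      (lt_of_le_of_ne hp (Ne.symm hp1))
    simpa using this
  · have := congrArg ENNReal.toReal hpq
    rw [ENNReal.toReal_add (by simp [one_div, ENNReal.inv_ne_top, hp0])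
      (by simp [one_div, ENNReal.inv_ne_top, hq0])] at this
    simpa [ENNReal.toReal_div] using this

lemma holder' {D : ℕ} (p q : ENNReal) (hp : 1 ≤ p) (hq : 1 ≤ q) (hpq : 1/p + 1/q = 1)
    (u w : Fin D → ℝ) : |∑ i, u i * w i| ≤ lpNorm p u * lpNorm q w := by
  rcases eq_or_ne p 1 with rfl | hp1
  · rw [q_top_of_p_one' q hpq]
    exact holder_one_top' u w
  rcases eq_or_ne p ⊤ with rfl | hpt
  · rw [q_one_of_p_top' q hpq]
    calc |∑ i, u i * w i| = |∑ i, w i * u i| := by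
          rw [Finset.sum_congr rfl (fun i _ => mul_comm (u i) (w i))]
      _ ≤ lpNorm 1 w * lpNorm ⊤ u := holder_one_top' w u
      _ = lpNorm ⊤ u * lpNorm 1 w := mul_comm _ _
  · have hconj := conj_real' p q hp hq hpq hp1 hpt
    have habs : |∑ i, u i * w i| ≤ ∑ i, |u i| * |w i| := by
      refine (Finset.abs_sum_le_sum_abs _ _).trans ?_
      simp [abs_mul, le_refl]
    refine habs.trans ?_
    have := Real.inner_le_Lp_mul_Lq (s := Finset.univ) (fun i => |u i|) (fun i => |w i|) hconj
    simp only [abs_abs] at this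
    rw [lpNorm_real' p hconj.pos, lpNorm_real' q hconj.symm.pos]
    exact this

/-! ### 1-D ODE comparison -/

lemma exp_deriv1' (b t : ℝ) :
    HasDerivAt (fun t : ℝ => Real.exp (b * t)) (b * Real.exp (b * t)) t := by
  simpa [mul_comm, Function.comp_def] using (Real.hasDerivAt_exp (b*t)).comp t ((hasDerivAt_id t).const_mul b)

lemma exp_deriv2' (b t : ℝ) :
    HasDerivAt (fun t : ℝ => Real.exp (-(b * t))) (-b * Real.exp (-(b * t))) t := by
  simpa [mul_comm, Function.comp_def] using (Real.hasDerivAt_exp (-(b*t))).comp t ((hasDerivAt_id t).const_mul b).neg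

lemma oneD' (φ s χ : ℝ → ℝ) (A K : ℝ) (hA : 0 ≤ A) (hK : 0 < K)
    (hφ : ∀ t, HasDerivAt φ (s t) t) (hs : ∀ t, HasDerivAt s (χ t) t)
    (hφnn : ∀ t, 0 ≤ φ t) (hχ : ∀ t, |χ t| ≤ K * (φ t + A)) :
    s 0 ≤ Real.sqrt K * (φ 0 + A) := by
  by_contra hcon
  push_neg at hcon
  set b := Real.sqrt K with hbdef
  have hb : 0 < b := Real.sqrt_pos.mpr hK
  have hb2 : b * b = K := Real.mul_self_sqrt hK.le
  set α : ℝ := (φ 0 + A - s 0 / b) / 2 with hα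
  set β : ℝ := (φ 0 + A + s 0 / b) / 2 with hβ
  have hαneg : α < 0 := by
    rw [hα]
    have h1 : φ 0 + A < s 0 / b := by
      rw [lt_div_iff₀ hb]
      nlinarith [hcon]
    linarith
  set w : ℝ → ℝ := fun t => φ (-t) + A with hw
  set w' : ℝ → ℝ := fun t => -s (-t) with hw'
  set z : ℝ → ℝ := fun t => α * Real.exp (b * t) + β * Real.exp (-(b * t)) with hz
  set z' : ℝ → ℝ := fun t => α * b * Real.exp (b * t) - β * b * Real.exp (-(b * t)) with hz'
  set d : ℝ → ℝ := fun t => w t - z t with hd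
  set d' : ℝ → ℝ := fun t => w' t - z' t with hd'
  set v : ℝ → ℝ := fun t => d' t - b * d t with hv
  have hwd : ∀ t, HasDerivAt w (w' t) t := by
    intro t
    have h := ((hφ (-t)).comp t (hasDerivAt_neg t)).add_const A
    simpa [hw, hw'] using h
  have hwdd : ∀ t, HasDerivAt w' (χ (-t)) t := by
    intro t
    have h := ((hs (-t)).comp t (hasDerivAt_neg t)).neg
    simpa [hw', Function.comp_def, Pi.neg_def] using h
  have hzd : ∀ t, HasDerivAt z (z' t) t := by
    intro t
    have h := ((exp_deriv1' b t).const_mul α).add ((exp_deriv2' b t).const_mul β)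
    refine h.congr_deriv ?_
    simp [hz']
    ring
  have hz'd : ∀ t, HasDerivAt z' (K * z t) t := by
    intro t
    have h := ((exp_deriv1' b t).const_mul (α * b)).sub ((exp_deriv2' b t).const_mul (β * b))
    refine h.congr_deriv ?_
    simp [hz]
    rw [← hb2]
    ring
  have hdd : ∀ t, HasDerivAt d (d' t) t := fun t => (hwd t).sub (hzd t)
  have hvd : ∀ t, HasDerivAt v ((χ (-t) - K * z t) - b * d' t) t := by
    intro t
    exact ((hwdd t).sub (hz'd t)).sub ((hdd t).const_mul b)
  have hd0 : d 0 = 0 := by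
    simp [hd, hw, hz, hα, hβ]
    ring
  have hd'0 : d' 0 = 0 := by
    simp [hd', hw', hz', hα, hβ]
    field_simp
    ring
  have hVd : ∀ t, HasDerivAt (fun t => v t * Real.exp (b * t))
      ((χ (-t) - K * w t) * Real.exp (b * t)) t := by
    intro t
    have h := (hvd t).mul (exp_deriv1' b t)
    refine h.congr_deriv ?_
    simp only [hv, hd, hd']
    rw [← hb2]
    ring
  have hVanti : Antitone (fun t => v t * Real.exp (b * t)) := by
    refine antitone_of_deriv_nonpos (fun t => (hVd t).differentiableAt) (fun t => ?_)
    rw [(hVd t).deriv]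
    have h2 : χ (-t) ≤ K * (φ (-t) + A) := (abs_le.mp (hχ (-t))).2
    have h1 : χ (-t) - K * w t ≤ 0 := by
      simp only [hw]
      linarith
    exact mul_nonpos_of_nonpos_of_nonneg h1 (Real.exp_nonneg _)
  have hvle : ∀ t, 0 ≤ t → v t ≤ 0 := by
    intro t ht
    have h := hVanti ht
    simp only [mul_zero, Real.exp_zero, mul_one] at h
    have hv0 : v 0 = 0 := by simp [hv, hd0, hd'0]
    rw [hv0] at h
    nlinarith [Real.exp_pos (b * t)]
  have hWd : ∀ t, HasDerivAt (fun t => d t * Real.exp (-(b * t)))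
      (v t * Real.exp (-(b * t))) t := by
    intro t
    have h := (hdd t).mul (exp_deriv2' b t)
    refine h.congr_deriv ?_
    simp only [hv]
    ring
  have hWanti : AntitoneOn (fun t => d t * Real.exp (-(b * t))) (Set.Ici 0) := by
    refine antitoneOn_of_deriv_nonpos (convex_Ici 0)
      (fun t _ => ((hWd t).differentiableAt).continuousAt.continuousWithinAt)
      (fun t _ => ((hWd t).differentiableAt).differentiableWithinAt) (fun t ht => ?_)
    rw [interior_Ici] at ht
    rw [(hWd t).deriv]
    exact mul_nonpos_of_nonpos_of_nonneg (hvle t (le_of_lt ht)) (Real.exp_nonneg _)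
  have hdle : ∀ t, 0 ≤ t → d t ≤ 0 := by
    intro t ht
    have h := hWanti (Set.self_mem_Ici) (Set.mem_Ici.mpr ht) ht
    simp only [mul_zero, Real.exp_zero, mul_one, neg_zero] at h
    rw [hd0] at h
    nlinarith [Real.exp_pos (-(b * t))]
  set M : ℝ := (|β| + 1) / (-α) with hM
  have hMpos : 0 < M := div_pos (by positivity) (neg_pos.mpr hαneg)
  set T : ℝ := max 0 (Real.log M / b) with hT
  have hT0 : 0 ≤ T := le_max_left _ _
  have hbT : Real.log M ≤ b * T := by
    have h1 : Real.log M / b ≤ T := le_max_right _ _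
    calc Real.log M = b * (Real.log M / b) := by field_simp
      _ ≤ b * T := mul_le_mul_of_nonneg_left h1 hb.le
  have hexp : M ≤ Real.exp (b * T) := by
    rw [← Real.exp_log hMpos]
    exact Real.exp_le_exp.mpr hbT
  have hzT : z T ≤ -1 := by
    have h1 : α * Real.exp (b * T) ≤ α * M := mul_le_mul_of_nonpos_left hexp hαneg.le
    have h2 : α * M = -(|β| + 1) := by
      rw [hM]
      field_simp [hαneg.ne]
    have h3 : β * Real.exp (-(b * T)) ≤ |β| := by
      calc β * Real.exp (-(b * T)) ≤ |β| * Real.exp (-(b * T)) :=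
            mul_le_mul_of_nonneg_right (le_abs_self β) (Real.exp_nonneg _)
        _ ≤ |β| * 1 := by
            refine mul_le_mul_of_nonneg_left ?_ (abs_nonneg _)
            rw [Real.exp_le_one_iff]
            nlinarith [mul_nonneg hb.le hT0]
        _ = |β| := mul_one _
    simp only [hz]
    linarith
  have hwT : 0 ≤ w T := by
    simp only [hw]
    have := hφnn (-T)
    linarith
  have hdT := hdle T hT0
  simp only [hd] at hdT
  linarith

/-! ### Main theorem -/

theorem stmt4 {D : ℕ} (p q : ENNReal) (hp : 1 ≤ p) (hq : 1 ≤ q) (hpq : 1/p + 1/q = 1)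
    (f : (Fin D → ℝ) → ℝ) (g : (Fin D → ℝ) → (Fin D → ℝ))
    (Hess : (Fin D → ℝ) → Matrix (Fin D) (Fin D) ℝ)
    (hfnn : ∀ θ, 0 ≤ f θ)
    (hgrad : ∀ θ, HasFDerivAt f (dotCLM (g θ)) θ)
    (hhess : ∀ θ, HasFDerivAt g (mulVecCLM (Hess θ)) θ)
    (H0 H1 : ℝ) (hH0 : 0 ≤ H0) (hH1 : 0 ≤ H1)
    (hnus : ∀ θ, opNorm p q (Hess θ) ≤ H0 + H1 * f θ) :
    ∀ x y, lpNorm p (y - x) ≤ 1 / Real.sqrt H1 →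
      lpNorm q (g y - g x) ≤ Real.exp 1 * (H0 + H1 * f x) * lpNorm p (y - x) := by
  intro x y hxy
  haveI : Fact (1 ≤ p) := ⟨hp⟩
  haveI : Fact (1 ≤ q) := ⟨hq⟩
  set L := lpNorm p (y - x) with hLdef
  have hLnn : 0 ≤ L := lpNorm_nonneg' p hp _
  rcases eq_or_lt_of_le hLnn with hL0 | hLpos
  · -- L = 0 :  y = x
    obtain rfl : y = x := by
      have := lpNorm_eq_zero' p hp hL0.symm
      have := sub_eq_zero.mp this
      exact this
    rw [← hL0, mul_zero, sub_self]
    simp [lpNorm, WithLp.toLp_zero]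
  · -- main case
    have hH1pos : 0 < H1 := by
      rcases eq_or_lt_of_le hH1 with h | h
      · exfalso
        rw [← h, Real.sqrt_zero, div_zero] at hxy
        exact absurd (lt_of_lt_of_le hLpos hxy) (lt_irrefl 0)
      · exact h
    set A := H0 / H1 with hA
    have hAnn : 0 ≤ A := div_nonneg hH0 hH1pos.le
    have hsum : ∀ θ, H0 + H1 * f θ = H1 * (f θ + A) := by
      intro θ
      rw [hA]
      field_simp
      ring
    set u := y - x with hu
    set K := H1 * L^2 with hK
    have hKpos : 0 < K := by positivity
    have hsqrtK : Real.sqrt K = Real.sqrt H1 * L := by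
      rw [hK, Real.sqrt_mul hH1, Real.sqrt_sq hLnn]
    set b := Real.sqrt H1 * L with hb
    have hbpos : 0 < b := by
      have := Real.sqrt_pos.mpr hH1pos
      positivity
    have hb1 : b ≤ 1 := by
      have hs : 0 < Real.sqrt H1 := Real.sqrt_pos.mpr hH1pos
      calc b = Real.sqrt H1 * L := hb
        _ ≤ Real.sqrt H1 * (1 / Real.sqrt H1) := mul_le_mul_of_nonneg_left hxy hs.le
        _ = 1 := by field_simp
    -- derivative of straight paths
    have hline : ∀ (θ : Fin D → ℝ) (t : ℝ), HasDerivAt (fun t : ℝ => θ + t • u) u t := by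
      intro θ t
      have h := ((hasDerivAt_id t).smul_const u).const_add θ
      simpa using h
    have hfd : ∀ (θ : Fin D → ℝ) (t : ℝ),
        HasDerivAt (fun t => f (θ + t • u)) (dotCLM u (g (θ + t • u))) t := by
      intro θ t
      have h := (hgrad (θ + t • u)).comp_hasDerivAt t (hline θ t)
      rw [dotCLM_comm']
      simpa [Function.comp_def] using h
    have hgd : ∀ (θ : Fin D → ℝ) (t : ℝ),
        HasDerivAt (fun t => g (θ + t • u)) ((Hess (θ + t • u)).mulVec u) t := by
      intro θ t
      have h := (hhess (θ + t • u)).comp_hasDerivAt t (hline θ t)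
      rw [← mulVecCLM_apply']
      simpa [Function.comp_def] using h
    have hsd : ∀ (θ : Fin D → ℝ) (t : ℝ),
        HasDerivAt (fun t => dotCLM u (g (θ + t • u)))
          (dotCLM u ((Hess (θ + t • u)).mulVec u)) t := by
      intro θ t
      have h := ((dotCLM u).hasFDerivAt).comp_hasDerivAt t (hgd θ t)
      simpa [Function.comp_def] using h
    -- Hölder bound on the second derivative along lines
    have hchi : ∀ (θ : Fin D → ℝ) (t : ℝ),
        |dotCLM u ((Hess (θ + t • u)).mulVec u)| ≤ K * (f (θ + t • u) + A) := by
      intro θ t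
      rw [dotCLM_apply']
      calc |∑ i, u i * (Hess (θ + t • u)).mulVec u i|
          ≤ lpNorm p u * lpNorm q ((Hess (θ + t • u)).mulVec u) :=
            holder' p q hp hq hpq _ _
        _ ≤ lpNorm p u * (opNorm p q (Hess (θ + t • u)) * lpNorm p u) := by
            refine mul_le_mul_of_nonneg_left (opNorm_bound' p q hp hq _ _) ?_
            exact lpNorm_nonneg' p hp u
        _ ≤ L * ((H0 + H1 * f (θ + t • u)) * L) := by
            refine mul_le_mul_of_nonneg_left ?_ hLnn
            exact mul_le_mul_of_nonneg_right (hnus _) hLnn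
        _ = K * (f (θ + t • u) + A) := by
            rw [hsum, hK]
            ring
    -- directional gradient bound at every point
    have key : ∀ θ : Fin D → ℝ, dotCLM u (g θ) ≤ b * (f θ + A) := by
      intro θ
      have h := oneD' (fun t => f (θ + t • u)) (fun t => dotCLM u (g (θ + t • u)))
        (fun t => dotCLM u ((Hess (θ + t • u)).mulVec u)) A K hAnn hKpos
        (hfd θ) (hsd θ) (fun t => hfnn _) (hchi θ)
      simp only [zero_smul, add_zero] at h
      rw [hsqrtK] at h
      exact h
    -- Grönwall along the segment from x to y
    have hPd : ∀ t : ℝ, HasDerivAt (fun t => (f (x + t • u) + A) * Real.exp (-(b * t)))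
        ((dotCLM u (g (x + t • u)) - b * (f (x + t • u) + A)) * Real.exp (-(b * t))) t := by
      intro t
      have h := ((hfd x t).add_const A).mul (exp_deriv2' b t)
      refine h.congr_deriv ?_
      ring
    have hPanti : Antitone (fun t => (f (x + t • u) + A) * Real.exp (-(b * t))) := by
      refine antitone_of_deriv_nonpos (fun t => (hPd t).differentiableAt) (fun t => ?_)
      rw [(hPd t).deriv]
      refine mul_nonpos_of_nonpos_of_nonneg ?_ (Real.exp_nonneg _)
      have := key (x + t • u)
      linarith
    have hpsi : ∀ t : ℝ, 0 ≤ t → t ≤ 1 → f (x + t • u) + A ≤ (f x + A) * Real.exp 1 := by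
      intro t ht0 ht1
      have h := hPanti ht0
      simp only [mul_zero, Real.exp_zero, mul_one, neg_zero, zero_smul, add_zero] at h
      have hmul : Real.exp (-(b * t)) * Real.exp (b * t) = 1 := by
        rw [← Real.exp_add]; simp
      have hexpbt : Real.exp (b * t) ≤ Real.exp 1 := by
        refine Real.exp_le_exp.mpr ?_
        calc b * t ≤ 1 * 1 := mul_le_mul hb1 ht1 ht0 zero_le_one
          _ = 1 := one_mul 1
      have hfxA : 0 ≤ f x + A := add_nonneg (hfnn x) hAnn
      nlinarith [Real.exp_pos (b * t), Real.exp_pos (-(b * t)), hfnn (x + t • u)]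
    -- the vector-valued path of gradients
    set G : ℝ → PiLp q (fun _ : Fin D => ℝ) :=
      fun t => (WithLp.equiv q (Fin D → ℝ)).symm (g (x + t • u)) with hG
    have hGd : ∀ t : ℝ, HasDerivAt G
        ((WithLp.equiv q (Fin D → ℝ)).symm ((Hess (x + t • u)).mulVec u)) t := by
      intro t
      have h := ((PiLp.continuousLinearEquiv q ℝ
        (fun _ : Fin D => ℝ)).symm.toContinuousLinearMap.hasFDerivAt).comp_hasDerivAt t (hgd x t)
      simpa [hG, Function.comp_def] using h
    have hbound : ∀ t ∈ Set.Ico (0:ℝ) 1,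
        ‖(WithLp.equiv q (Fin D → ℝ)).symm ((Hess (x + t • u)).mulVec u)‖ ≤
          Real.exp 1 * (H0 + H1 * f x) * L := by
      intro t ht
      have h1 : ‖(WithLp.equiv q (Fin D → ℝ)).symm ((Hess (x + t • u)).mulVec u)‖ =
          lpNorm q ((Hess (x + t • u)).mulVec u) := rfl
      rw [h1]
      calc lpNorm q ((Hess (x + t • u)).mulVec u)
          ≤ opNorm p q (Hess (x + t • u)) * lpNorm p u := opNorm_bound' p q hp hq _ _
        _ ≤ (H0 + H1 * f (x + t • u)) * L := by
            exact mul_le_mul_of_nonneg_right (hnus _) hLnn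
        _ = H1 * (f (x + t • u) + A) * L := by rw [hsum]
        _ ≤ H1 * ((f x + A) * Real.exp 1) * L := by
            refine mul_le_mul_of_nonneg_right ?_ hLnn
            exact mul_le_mul_of_nonneg_left (hpsi t ht.1 ht.2.le) hH1pos.le
        _ = Real.exp 1 * (H0 + H1 * f x) * L := by
            rw [hsum]
            ring
    have hfinal := norm_image_sub_le_of_norm_deriv_le_segment_01'
      (fun t _ => (hGd t).hasDerivWithinAt) hbound
    have hc1 : x + (1:ℝ) • u = y := by
      rw [hu]
      simp
    have hc0 : x + (0:ℝ) • u = x := by simp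
    rw [hG] at hfinal
    simp only [hc1, hc0] at hfinal
    rw [WithLp.equiv_symm_apply, ← WithLp.toLp_sub] at hfinal
    exact hfinal
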